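/- For every real Ω ≥ 1, one has (√π/2) · √Ω · Γ(Ω) ≤ Γ(Ω + 1/2), with equality if and only if Ω = 1; equivalently, the ratio (√π/2)·√Ω·Γ(Ω)/Γ(Ω+1/2) attains its maximum value 1 at Ω = 1. Consequently, if X has the Rayleigh density with power parameter σ_I² = σ_s² φ and Y has the Nakagami density with shape Ω and spread φ (with φ > 0, σ_s > 0), then E[X] ≤ σ_s E[Y], i.e., the mean interference magnitude under f-FAMA is at most that under s-FAMA. -/

import Mathlib

open MeasureTheory ProbabilityTheory Real Set

/-- The Nakagami density with shape `m` and spread `Ω`. -/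
noncomputable def nakagamiPDF (m Ω τ : ℝ) : ℝ :=
  if 0 < τ then
    2 * m ^ m * τ ^ (2 * m - 1) * Real.exp (-(m * τ ^ 2) / Ω) / (Real.Gamma m * Ω ^ m)
  else 0

/-- The Rayleigh density with power parameter `c`. -/
noncomputable def rayleighPDF (c τ : ℝ) : ℝ :=
  if 0 < τ then 2 * τ / c * Real.exp (-τ ^ 2 / c) else 0

open Filter Finset
open scoped ENNReal NNReal


noncomputable def qfac (x : ℝ) (j : ℕ) : ℝ := (x + j) * (x + 1 + j) / (x + 1/2 + j) ^ 2

lemma qfac_pos {x : ℝ} (hx : 0 < x) (j : ℕ) : 0 < qfac x j := by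
  have : (0:ℝ) ≤ j := Nat.cast_nonneg j
  unfold qfac; positivity

lemma qfac_le {x y : ℝ} (hx : 0 < x) (hxy : x ≤ y) (j : ℕ) : qfac x j ≤ qfac y j := by
  have hj : (0:ℝ) ≤ j := Nat.cast_nonneg j
  have hy : 0 < y := lt_of_lt_of_le hx hxy
  unfold qfac
  rw [div_le_div_iff₀ (by positivity) (by positivity)]
  nlinarith [sq_nonneg (x + y + 1 + 2*j)]

lemma qfac_lt {x y : ℝ} (hx : 0 < x) (hxy : x < y) (j : ℕ) : qfac x j < qfac y j := by
  have hj : (0:ℝ) ≤ j := Nat.cast_nonneg j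
  have hy : 0 < y := hx.trans hxy
  unfold qfac
  rw [div_lt_div_iff₀ (by positivity) (by positivity)]
  nlinarith [sq_nonneg (x + y + 1 + 2*j)]

noncomputable def qprod (x : ℝ) (n : ℕ) : ℝ := ∏ j ∈ Finset.range (n+1), qfac x j

lemma qprod_tendsto {x : ℝ} (hx : 0 < x) :
    Tendsto (qprod x) atTop
      (nhds (Real.Gamma (x + 1/2) ^ 2 / (Real.Gamma x * Real.Gamma (x+1)))) := by
  have h1 := Real.GammaSeq_tendsto_Gamma (x + 1/2)
  have h2 := Real.GammaSeq_tendsto_Gamma x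
  have h3 := Real.GammaSeq_tendsto_Gamma (x + 1)
  have hne : Real.Gamma x * Real.Gamma (x+1) ≠ 0 :=
    (mul_pos (Real.Gamma_pos_of_pos hx) (Real.Gamma_pos_of_pos (by linarith))).ne'
  have H := ((h1.mul h1).div (h2.mul h3) hne)
  rw [show Real.Gamma (x+1/2) ^ 2 = Real.Gamma (x+1/2) * Real.Gamma (x+1/2) by ring]
  refine H.congr' ?_
  filter_upwards [eventually_ge_atTop 1] with n hn
  have hn0 : (0:ℝ) < (n:ℝ) := by exact_mod_cast hn
  have hfact : (0:ℝ) < (Nat.factorial n : ℝ) := by exact_mod_cast (Nat.factorial_pos n)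
  unfold Real.GammaSeq qprod qfac
  have hPx : (0:ℝ) < ∏ j ∈ Finset.range (n+1), (x + j) := by
    apply Finset.prod_pos; intro j _; have : (0:ℝ) ≤ j := Nat.cast_nonneg j; linarith
  have hPh : (0:ℝ) < ∏ j ∈ Finset.range (n+1), (x + 1/2 + j) := by
    apply Finset.prod_pos; intro j _; have : (0:ℝ) ≤ j := Nat.cast_nonneg j; linarith
  have hP1 : (0:ℝ) < ∏ j ∈ Finset.range (n+1), (x + 1 + j) := by
    apply Finset.prod_pos; intro j _; have : (0:ℝ) ≤ j := Nat.cast_nonneg j; linarith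
  have hr1 : (0:ℝ) < (n:ℝ) ^ (x + 1/2) := rpow_pos_of_pos hn0 _
  have hr2 : (0:ℝ) < (n:ℝ) ^ x := rpow_pos_of_pos hn0 _
  have hr3 : (0:ℝ) < (n:ℝ) ^ (x+1) := rpow_pos_of_pos hn0 _
  have hkey : (n:ℝ) ^ (x + 1/2) * (n:ℝ) ^ (x + 1/2) = (n:ℝ) ^ x * (n:ℝ) ^ (x+1) := by
    rw [← Real.rpow_add hn0, ← Real.rpow_add hn0]; ring_nf
  rw [Finset.prod_div_distrib, Finset.prod_mul_distrib, Finset.prod_pow]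
  simp only [Pi.div_apply]
  set A := (n:ℝ) ^ (x + 1/2) with hA
  set B := (n:ℝ) ^ x with hB
  set C := (n:ℝ) ^ (x + 1) with hC
  set F := (n.factorial : ℝ) with hF
  set Px := ∏ j ∈ Finset.range (n+1), (x + (j:ℝ)) with hPx'
  set Ph := ∏ j ∈ Finset.range (n+1), (x + 1/2 + (j:ℝ)) with hPh'
  set P1 := ∏ j ∈ Finset.range (n+1), (x + 1 + (j:ℝ)) with hP1'
  field_simp
  linear_combination hkey

lemma qprod_one_tendsto : Tendsto (qprod 1) atTop (nhds (π/4)) := by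
  have h := qprod_tendsto (x := 1) one_pos
  have h32 : Real.Gamma ((1:ℝ) + 1/2) = Real.sqrt π / 2 := by
    rw [show (1:ℝ) + 1/2 = 1/2 + 1 by norm_num, Real.Gamma_add_one (by norm_num),
      Real.Gamma_one_half_eq]; ring
  have h2 : Real.Gamma ((1:ℝ) + 1) = 1 := by
    rw [Real.Gamma_add_one one_ne_zero, Real.Gamma_one, mul_one]
  rw [h32, h2, Real.Gamma_one] at h
  convert h using 2
  rw [div_pow, sq_sqrt pi_nonneg]
  norm_num

lemma pi_quarter_le {x : ℝ} (hx : 1 ≤ x) :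
    π/4 ≤ Real.Gamma (x + 1/2) ^ 2 / (Real.Gamma x * Real.Gamma (x+1)) := by
  refine le_of_tendsto_of_tendsto' qprod_one_tendsto
    (qprod_tendsto (lt_of_lt_of_le one_pos hx)) (fun n => ?_)
  refine Finset.prod_le_prod (fun j _ => (qfac_pos one_pos j).le)
    (fun j _ => qfac_le one_pos hx j)

lemma pi_quarter_lt {x : ℝ} (hx : 1 < x) :
    π/4 < Real.Gamma (x + 1/2) ^ 2 / (Real.Gamma x * Real.Gamma (x+1)) := by
  have hx0 : (0:ℝ) < x := lt_trans one_pos hx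
  set c : ℝ := qfac x 0 / qfac 1 0 with hc
  have hc1 : 1 < c := by
    rw [hc, lt_div_iff₀ (qfac_pos one_pos 0), one_mul]
    exact qfac_lt one_pos hx 0
  have hle : c * (π/4) ≤ Real.Gamma (x + 1/2) ^ 2 / (Real.Gamma x * Real.Gamma (x+1)) := by
    refine le_of_tendsto_of_tendsto' (qprod_one_tendsto.const_mul c)
      (qprod_tendsto hx0) (fun n => ?_)
    unfold qprod
    rw [Finset.prod_range_succ' (fun j => qfac 1 j), Finset.prod_range_succ' (fun j => qfac x j)]
    have : c * ((∏ i ∈ Finset.range n, qfac 1 (i+1)) * qfac 1 0)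
        = (∏ i ∈ Finset.range n, qfac 1 (i+1)) * qfac x 0 := by
      rw [hc]; field_simp [(qfac_pos one_pos 0).ne']
    rw [this]
    exact mul_le_mul_of_nonneg_right
      (Finset.prod_le_prod (fun j _ => (qfac_pos one_pos _).le)
        (fun j _ => qfac_le one_pos hx.le _)) (qfac_pos hx0 0).le
  have : π/4 < c * (π/4) := by nlinarith [pi_pos]
  linarith

lemma gamma_half_ineq {x : ℝ} (hx : 1 ≤ x) :
    Real.sqrt π / 2 * Real.sqrt x * Real.Gamma x ≤ Real.Gamma (x + 1/2) := by
  have hx0 : (0:ℝ) < x := lt_of_lt_of_le one_pos hx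
  have hg : 0 < Real.Gamma x := Real.Gamma_pos_of_pos hx0
  have hg2 : 0 < Real.Gamma (x + 1/2) := Real.Gamma_pos_of_pos (by linarith)
  have h := pi_quarter_le hx
  rw [Real.Gamma_add_one hx0.ne', le_div_iff₀ (by positivity)] at h
  have hsq : (Real.sqrt π / 2 * Real.sqrt x * Real.Gamma x) ^ 2
      ≤ Real.Gamma (x + 1/2) ^ 2 := by
    calc (Real.sqrt π / 2 * Real.sqrt x * Real.Gamma x) ^ 2
        = π/4 * (Real.Gamma x * (x * Real.Gamma x)) := by
          rw [mul_pow, mul_pow, div_pow, sq_sqrt pi_nonneg, sq_sqrt hx0.le]; ring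
      _ ≤ _ := h
  calc Real.sqrt π / 2 * Real.sqrt x * Real.Gamma x
      = Real.sqrt ((Real.sqrt π / 2 * Real.sqrt x * Real.Gamma x)^2) := by
        rw [Real.sqrt_sq (by positivity)]
    _ ≤ Real.sqrt (Real.Gamma (x + 1/2)^2) := Real.sqrt_le_sqrt hsq
    _ = Real.Gamma (x + 1/2) := Real.sqrt_sq hg2.le

lemma gamma_half_strict {x : ℝ} (hx : 1 < x) :
    Real.sqrt π / 2 * Real.sqrt x * Real.Gamma x < Real.Gamma (x + 1/2) := by
  have hx0 : (0:ℝ) < x := lt_trans one_pos hx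
  have hg : 0 < Real.Gamma x := Real.Gamma_pos_of_pos hx0
  have hg2 : 0 < Real.Gamma (x + 1/2) := Real.Gamma_pos_of_pos (by linarith)
  have h := pi_quarter_lt hx
  rw [Real.Gamma_add_one hx0.ne', lt_div_iff₀ (by positivity)] at h
  have hsq : (Real.sqrt π / 2 * Real.sqrt x * Real.Gamma x) ^ 2
      < Real.Gamma (x + 1/2) ^ 2 := by
    calc (Real.sqrt π / 2 * Real.sqrt x * Real.Gamma x) ^ 2
        = π/4 * (Real.Gamma x * (x * Real.Gamma x)) := by
          rw [mul_pow, mul_pow, div_pow, sq_sqrt pi_nonneg, sq_sqrt hx0.le]; ring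
      _ < _ := h
  nlinarith [hsq, hg2, sqrt_nonneg π, sqrt_nonneg x, hg]


lemma expectation_eq {Ωs : Type*} [MeasurableSpace Ωs] (P : Measure Ωs)
    (X : Ωs → ℝ) (hXmeas : Measurable X) (g : ℝ → ℝ) (hg : Measurable g) (hg0 : ∀ τ, 0 ≤ g τ)
    (hX : Measure.map X P = volume.withDensity (fun τ => ENNReal.ofReal (g τ))) :
    ∫ ω, X ω ∂P = ∫ τ, g τ * τ := by
  have h1 : ∫ ω, X ω ∂P = ∫ x, x ∂(Measure.map X P) :=
    (integral_map hXmeas.aemeasurable aestronglyMeasurable_id).symm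
  rw [h1, hX]
  have h2 : (fun τ => ENNReal.ofReal (g τ)) = fun τ => ((g τ).toNNReal : ℝ≥0∞) := rfl
  rw [h2]
  have h3 := integral_withDensity_eq_integral_smul (μ := (volume : Measure ℝ))
    (f := fun τ => (g τ).toNNReal) hg.real_toNNReal (fun x : ℝ => x)
  rw [h3]
  congr 1
  ext τ
  simp [NNReal.smul_def, Real.coe_toNNReal _ (hg0 τ)]

lemma rayleigh_meas (c : ℝ) : Measurable (rayleighPDF c) := by
  unfold rayleighPDF
  refine Measurable.ite (measurableSet_lt measurable_const measurable_id) ?_ measurable_const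
  fun_prop

lemma rayleigh_nonneg {c : ℝ} (hc : 0 < c) (τ : ℝ) : 0 ≤ rayleighPDF c τ := by
  unfold rayleighPDF
  split
  · next h => positivity
  · exact le_rfl

lemma nakagami_meas (m Ω : ℝ) : Measurable (nakagamiPDF m Ω) := by
  unfold nakagamiPDF
  refine Measurable.ite (measurableSet_lt measurable_const measurable_id) ?_ measurable_const
  fun_prop

lemma nakagami_nonneg {m Ω : ℝ} (hm : 0 < m) (hΩ : 0 < Ω) (τ : ℝ) : 0 ≤ nakagamiPDF m Ω τ := by
  unfold nakagamiPDF
  split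
  · next h =>
    have := Real.Gamma_pos_of_pos hm
    positivity
  · exact le_rfl

lemma rayleigh_integral {c : ℝ} (hc : 0 < c) :
    ∫ τ, rayleighPDF c τ * τ = Real.sqrt c * (Real.sqrt π / 2) := by
  have hrw : (fun τ => rayleighPDF c τ * τ)
      = Set.indicator (Set.Ioi (0:ℝ))
        (fun τ => (2/c) * (τ ^ (2:ℝ) * Real.exp (-(1/c) * τ ^ (2:ℝ)))) := by
    ext τ
    by_cases h : 0 < τ
    · rw [Set.indicator_of_mem (Set.mem_Ioi.mpr h)]
      unfold rayleighPDF
      rw [if_pos h, show (2:ℝ) = ((2:ℕ):ℝ) by norm_num, Real.rpow_natCast]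
      rw [show -(1/c) * τ ^ (2:ℕ) = -τ^2/c by ring]
      ring
    · rw [Set.indicator_of_notMem (by simpa using h)]
      unfold rayleighPDF
      rw [if_neg h, zero_mul]
  rw [hrw, integral_indicator measurableSet_Ioi, integral_const_mul,
      integral_rpow_mul_exp_neg_mul_rpow two_pos (by norm_num) (by positivity)]
  have h32 : Real.Gamma (((2:ℝ) + 1)/2) = Real.sqrt π / 2 := by
    rw [show ((2:ℝ)+1)/2 = 1/2 + 1 by norm_num, Real.Gamma_add_one (by norm_num),
      Real.Gamma_one_half_eq]; ring
  rw [h32]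
  rw [show (1/c : ℝ) = c⁻¹ by ring, Real.inv_rpow hc.le, ← Real.rpow_neg hc.le]
  rw [show (-(-((2:ℝ)+1)/2) : ℝ) = 1/2 + 1 by norm_num, Real.rpow_add hc, Real.rpow_one]
  rw [← Real.sqrt_eq_rpow]
  field_simp

lemma nakagami_integral {m φ : ℝ} (hm : 0 < m) (hφ : 0 < φ) :
    ∫ τ, nakagamiPDF m φ τ * τ
      = Real.Gamma (m + 1/2) / Real.Gamma m * (Real.sqrt φ / Real.sqrt m) := by
  have hΓ : 0 < Real.Gamma m := Real.Gamma_pos_of_pos hm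
  have hrw : (fun τ => nakagamiPDF m φ τ * τ)
      = Set.indicator (Set.Ioi (0:ℝ))
        (fun τ => (2 * m ^ m / (Real.Gamma m * φ ^ m))
          * (τ ^ (2*m) * Real.exp (-(m/φ) * τ ^ (2:ℝ)))) := by
    ext τ
    by_cases h : 0 < τ
    · rw [Set.indicator_of_mem (Set.mem_Ioi.mpr h)]
      unfold nakagamiPDF
      rw [if_pos h]
      have hτ2 : τ ^ (2:ℝ) = τ ^ (2:ℕ) := by
        rw [show (2:ℝ) = ((2:ℕ):ℝ) by norm_num, Real.rpow_natCast]
      rw [hτ2, show (2*m : ℝ) = (2*m - 1) + 1 by ring, Real.rpow_add h, Real.rpow_one,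
        show -(m/φ) * τ ^ (2:ℕ) = -(m * τ^2)/φ by ring]
      ring
    · rw [Set.indicator_of_notMem (by simpa using h)]
      unfold nakagamiPDF
      rw [if_neg h, zero_mul]
  rw [hrw, integral_indicator measurableSet_Ioi, integral_const_mul,
      integral_rpow_mul_exp_neg_mul_rpow two_pos (by linarith) (by positivity)]
  have hΓ2 : Real.Gamma ((2*m+1)/2) = Real.Gamma (m + 1/2) := by norm_num; ring_nf
  rw [hΓ2]
  have hdiv : (m/φ) ^ (-(2*m+1)/2 : ℝ) = φ ^ (m + 1/2 : ℝ) / m ^ (m + 1/2 : ℝ) := by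
    rw [show (-(2*m+1)/2 : ℝ) = -(m + 1/2) by ring, Real.rpow_neg (by positivity),
      Real.div_rpow hm.le hφ.le, inv_div]
  rw [hdiv]
  have hφa : φ ^ (m + 1/2 : ℝ) = φ ^ (m:ℝ) * Real.sqrt φ := by
    rw [Real.rpow_add hφ, Real.sqrt_eq_rpow]
  have hma : m ^ (m + 1/2 : ℝ) = m ^ (m:ℝ) * Real.sqrt m := by
    rw [Real.rpow_add hm, Real.sqrt_eq_rpow]
  rw [hφa, hma]
  have h1 : (0:ℝ) < φ ^ (m:ℝ) := Real.rpow_pos_of_pos hφ _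
  have h2 : (0:ℝ) < m ^ (m:ℝ) := Real.rpow_pos_of_pos hm _
  have h3 : (0:ℝ) < Real.sqrt φ := Real.sqrt_pos.mpr hφ
  have h4 : (0:ℝ) < Real.sqrt m := Real.sqrt_pos.mpr hm
  field_simp

/-- for every real `Ω ≥ 1`, `(√π/2)·√Ω·Γ(Ω) ≤ Γ(Ω + 1/2)` with equality
iff `Ω = 1`; consequently if `X` is Rayleigh with power parameter `σ_I² = σ_s² φ` and
`Y` is Nakagami with shape `Ω` and spread `φ`, then `E[X] ≤ σ_s E[Y]`. -/
theorem stmt_17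
    {Ωs : Type*} [MeasurableSpace Ωs] (P : Measure Ωs) [IsProbabilityMeasure P]
    (Ω φ σs : ℝ) (hΩ : 1 ≤ Ω) (hφ : 0 < φ) (hσs : 0 < σs)
    (X Y : Ωs → ℝ) (hXmeas : Measurable X) (hYmeas : Measurable Y)
    (hX : Measure.map X P =
      volume.withDensity (fun τ => ENNReal.ofReal (rayleighPDF (σs ^ 2 * φ) τ)))
    (hY : Measure.map Y P =
      volume.withDensity (fun τ => ENNReal.ofReal (nakagamiPDF Ω φ τ))) :
    ((Real.sqrt π / 2) * Real.sqrt Ω * Real.Gamma Ω ≤ Real.Gamma (Ω + 1 / 2)) ∧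
    ((Real.sqrt π / 2) * Real.sqrt Ω * Real.Gamma Ω = Real.Gamma (Ω + 1 / 2) ↔ Ω = 1) ∧
    (∫ ω, X ω ∂P ≤ σs * ∫ ω, Y ω ∂P) := by
  have hΩ0 : (0:ℝ) < Ω := lt_of_lt_of_le one_pos hΩ
  refine ⟨gamma_half_ineq hΩ, ?_, ?_⟩
  · constructor
    · intro h
      by_contra hne
      have h1 : 1 < Ω := lt_of_le_of_ne hΩ (Ne.symm hne)
      exact absurd h (ne_of_lt (gamma_half_strict h1))
    · rintro rfl
      rw [Real.sqrt_one, mul_one, Real.Gamma_one, mul_one,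
        show (1:ℝ)+1/2 = 1/2+1 by norm_num, Real.Gamma_add_one (by norm_num),
        Real.Gamma_one_half_eq]
      ring
  · have hc : (0:ℝ) < σs^2*φ := by positivity
    have hEX := expectation_eq P X hXmeas _ (rayleigh_meas (σs^2*φ)) (rayleigh_nonneg hc) hX
    have hEY := expectation_eq P Y hYmeas _ (nakagami_meas Ω φ) (nakagami_nonneg hΩ0 hφ) hY
    rw [hEX, hEY, rayleigh_integral hc, nakagami_integral hΩ0 hφ]
    have hs : Real.sqrt (σs^2*φ) = σs * Real.sqrt φ := by
      rw [Real.sqrt_mul (by positivity), Real.sqrt_sq hσs.le]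
    rw [hs]
    have hg : 0 < Real.Gamma Ω := Real.Gamma_pos_of_pos hΩ0
    have hsΩ : 0 < Real.sqrt Ω := Real.sqrt_pos.mpr hΩ0
    have hsφ : 0 < Real.sqrt φ := Real.sqrt_pos.mpr hφ
    have key := gamma_half_ineq hΩ
    have h2 : Real.sqrt π/2 ≤ Real.Gamma (Ω+1/2) / (Real.Gamma Ω * Real.sqrt Ω) := by
      rw [le_div_iff₀ (by positivity)]
      nlinarith [key]
    calc σs*Real.sqrt φ*(Real.sqrt π/2)
        ≤ σs*Real.sqrt φ*(Real.Gamma (Ω+1/2)/(Real.Gamma Ω*Real.sqrt Ω)) :=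
          mul_le_mul_of_nonneg_left h2 (by positivity)
      _ = σs*(Real.Gamma (Ω+1/2)/Real.Gamma Ω*(Real.sqrt φ/Real.sqrt Ω)) := by
          field_simp
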